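/- arXiv:1303.2059 — 4 statements merged into one kernel-verified Lean document; each statement's English description precedes it below -/
import Mathlib

section
/- In every acyclic hypergraph (i.e., a hypergraph of generalized hypertree width 1) without isolated vertices, the maximum size of an independent set equals the minimum size of an edge cover. -/
structure GHD (V : Type) [DecidableEq V] (E : Finset (Finset V)) where
  T : Type
  G : SimpleGraph T
  isTree : G.IsTree
  root : T
  lam : T → Finset (Finset V)
  chi : T → Finset V
  lam_sub : ∀ t, lam t ⊆ E
  conn : ∀ v : V, (G.induce {t | v ∈ chi t}).Preconnected
  edge_cover : ∀ e ∈ E, ∃ t, e ⊆ chi t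
  guard : ∀ t, ∀ v ∈ chi t, ∃ e ∈ lam t, v ∈ e

def IsIndep {V : Type} [DecidableEq V] (E : Finset (Finset V)) (I : Finset V) : Prop :=
  ∀ e ∈ E, ∀ u ∈ I, ∀ v ∈ I, u ∈ e → v ∈ e → u = v

def GHD.Desc {V : Type} [DecidableEq V] {E : Finset (Finset V)} (D : GHD V E)
    (t s : D.T) : Prop :=
  ∀ p : D.G.Walk s D.root, t ∈ p.support

def GHD.Vt {V : Type} [DecidableEq V] {E : Finset (Finset V)} (D : GHD V E)
    (t : D.T) : Set V :=
  {v | ∃ s, D.Desc t s ∧ v ∈ D.chi s}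

def IsEdgeCover {V : Type} [Fintype V] [DecidableEq V]
    (E : Finset (Finset V)) (C : Finset (Finset V)) : Prop :=
  C ⊆ E ∧ ∀ v : V, ∃ e ∈ C, v ∈ e


open SimpleGraph

section TreeLemmas

variable {T : Type} [DecidableEq T] {G : SimpleGraph T} {r : T}

variable (P : ∀ a : T, G.Walk a r)

/-- helper: unique-path assumptions -/
structure PathSys (G : SimpleGraph T) (r : T) (P : ∀ a : T, G.Walk a r) : Prop where
  acyclic : G.IsAcyclic
  isPath : ∀ a, (P a).IsPath
  uniq : ∀ a (q : G.Walk a r), q.IsPath → q = P a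

namespace PathSys

variable {P} (hP : PathSys G r P)

lemma mem_of_walk (hP : PathSys G r P) {a x : T} (w : G.Walk a r)
    (hx : x ∈ (P a).support) : x ∈ w.support := by
  have hb := hP.uniq a w.bypass (SimpleGraph.Walk.bypass_isPath w)
  rw [← hb] at hx
  exact SimpleGraph.Walk.support_bypass_subset w hx

lemma drop_eq (hP : PathSys G r P) {c x : T} (h : x ∈ (P c).support) :
    (P c).dropUntil x h = P x :=
  hP.uniq x _ ((hP.isPath c).dropUntil h)

lemma length_split (hP : PathSys G r P) {c x : T} (h : x ∈ (P c).support) :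
    (P c).length = ((P c).takeUntil x h).length + (P x).length := by
  have := congrArg SimpleGraph.Walk.length ((P c).take_spec h)
  rw [SimpleGraph.Walk.length_append, hP.drop_eq h] at this
  omega

lemma length_le (hP : PathSys G r P) {c x : T} (h : x ∈ (P c).support) :
    (P x).length ≤ (P c).length := by
  have := hP.length_split h; omega

lemma adj_dichotomy (hP : PathSys G r P) {b c : T} (hadj : G.Adj b c) :
    c ∈ (P b).support ∨ b ∈ (P c).support := by
  by_cases hb : b ∈ (P c).support
  · exact Or.inr hb
  · left
    have hpath : (SimpleGraph.Walk.cons hadj (P c)).IsPath :=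
      (SimpleGraph.Walk.cons_isPath_iff _ _).2 ⟨hP.isPath c, hb⟩
    have := hP.uniq b _ hpath
    rw [← this]
    rw [SimpleGraph.Walk.support_cons]
    exact List.mem_cons_of_mem _ (SimpleGraph.Walk.start_mem_support _)

lemma between (hP : PathSys G r P) {a b c : T} (ha : a ∈ (P c).support)
    (hb : b ∈ (P c).support) (hd : (P a).length ≤ (P b).length) :
    a ∈ (P b).support := by
  by_contra hab
  have ha' : a ∈ ((P c).takeUntil b hb).support := by
    have h2 : a ∈ ((P c).takeUntil b hb).support ∨ a ∈ ((P c).dropUntil b hb).support := by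
      rw [← SimpleGraph.Walk.mem_support_append_iff, (P c).take_spec hb]
      exact ha
    rcases h2 with h2 | h2
    · exact h2
    · rw [hP.drop_eq hb] at h2; exact absurd h2 hab
  have l1 := hP.length_split ha
  have l2 := hP.length_split hb
  set q := (P c).takeUntil b hb with hq_def
  have hq : q.IsPath := (hP.isPath c).takeUntil hb
  have e1 : (q.takeUntil a ha').length = ((P c).takeUntil a ha).length := by
    have h1 : (q.takeUntil a ha').IsPath := hq.takeUntil _
    have h2 : ((P c).takeUntil a ha).IsPath := (hP.isPath c).takeUntil _
    have := hP.acyclic.path_unique ⟨q.takeUntil a ha', h1⟩ ⟨(P c).takeUntil a ha, h2⟩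
    rw [Subtype.mk.injEq] at this
    rw [this]
  have l3 : (q.takeUntil a ha').length + (q.dropUntil a ha').length = q.length := by
    have := congrArg SimpleGraph.Walk.length (q.take_spec ha')
    rw [SimpleGraph.Walk.length_append] at this
    omega
  have l4 : (q.dropUntil a ha').length = 0 := by omega
  have : a = b := SimpleGraph.Walk.eq_of_length_eq_zero l4
  subst this
  exact hab (SimpleGraph.Walk.start_mem_support _)

end PathSys

/-- From preconnectedness of an induced graph, extract a walk staying in the set. -/
lemma walk_in_set {S : Set T} (hS : (G.induce S).Preconnected) {a b : T}
    (ha : a ∈ S) (hb : b ∈ S) :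
    ∃ w : G.Walk a b, ∀ x ∈ w.support, x ∈ S := by
  obtain ⟨w₀⟩ := hS ⟨a, ha⟩ ⟨b, hb⟩
  refine ⟨w₀.map (SimpleGraph.Embedding.induce S).toHom, ?_⟩
  intro x hx
  replace hx : x ∈ w₀.support.map (SimpleGraph.Embedding.induce (G := G) S).toHom := by
    rw [← SimpleGraph.Walk.support_map]; exact hx
  obtain ⟨y, _, rfl⟩ := List.mem_map.mp hx
  exact y.2

lemma PathSys.walk_anc {P : ∀ a : T, G.Walk a r} (hP : PathSys G r P) {S : Set T}
    {b a : T} (w : G.Walk b a) (hw : ∀ x ∈ w.support, x ∈ S)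
    (hmin : ∀ x ∈ S, (P a).length ≤ (P x).length) : a ∈ (P b).support := by
  revert hw hmin
  induction w with
  | nil => intro _ _; exact SimpleGraph.Walk.start_mem_support _
  | @cons u v a hadj w ih =>
    intro hw hmin
    have hu : u ∈ S := hw _ (SimpleGraph.Walk.start_mem_support _)
    have hIH : a ∈ (P v).support := ih (fun x hx => hw x (by
      rw [SimpleGraph.Walk.support_cons]; exact List.mem_cons_of_mem _ hx)) hmin
    rcases hP.adj_dichotomy hadj with h | h
    · have h2 : a ∈ ((P u).dropUntil v h).support := by rw [hP.drop_eq h]; exact hIH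
      exact SimpleGraph.Walk.support_dropUntil_subset _ h h2
    · exact hP.between hIH h (hmin u hu)

lemma PathSys.min_anc {P : ∀ a : T, G.Walk a r} (hP : PathSys G r P) {S : Set T}
    (hS : (G.induce S).Preconnected) {a : T} (ha : a ∈ S)
    (hmin : ∀ x ∈ S, (P a).length ≤ (P x).length) :
    ∀ b ∈ S, a ∈ (P b).support := by
  intro b hb
  obtain ⟨w, hw⟩ := walk_in_set hS hb ha
  exact hP.walk_anc w hw hmin

end TreeLemmas

section Hyper

variable {V : Type} [DecidableEq V]

lemma exists_pivot (E : Finset (Finset V)) (D : GHD V E)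
    (hw : ∀ t, (D.lam t).card ≤ 1) (hne : (E.sup id).Nonempty) :
    ∃ e ∈ E, ∃ v ∈ e, ∀ f ∈ E, v ∈ f → f ⊆ e := by
  classical
  obtain ⟨hV, hEU⟩ := SimpleGraph.isTree_iff_existsUnique_path.mp D.isTree
  have hPex : ∀ a : D.T, ∃ p : D.G.Walk a D.root,
      p.IsPath ∧ ∀ q : D.G.Walk a D.root, q.IsPath → q = p := by
    intro a
    obtain ⟨p, hp, hu⟩ := hEU a D.root
    exact ⟨p, hp, hu⟩
  choose P hPp hPu using hPex
  have hP : PathSys D.G D.root P :=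
    ⟨D.isTree.2, hPp, hPu⟩
  -- every supported vertex is in some bag
  have hTv : ∀ v ∈ E.sup id, ∃ t, v ∈ D.chi t := by
    intro v hv
    obtain ⟨g, hg, hvg⟩ := Finset.mem_sup.mp hv
    obtain ⟨t, ht⟩ := D.edge_cover g hg
    exact ⟨t, ht (by simpa using hvg)⟩
  -- f v = minimal depth of a bag containing v
  set f : V → ℕ := fun v => sInf {n | ∃ t, v ∈ D.chi t ∧ (P t).length = n} with hf_def
  have hfmem : ∀ v ∈ E.sup id,
      ∃ t, v ∈ D.chi t ∧ (P t).length = f v ∧ ∀ s, v ∈ D.chi s → f v ≤ (P s).length := by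
    intro v hv
    obtain ⟨t0, ht0⟩ := hTv v hv
    have hne' : {n | ∃ t, v ∈ D.chi t ∧ (P t).length = n}.Nonempty := ⟨(P t0).length, t0, ht0, rfl⟩
    obtain ⟨t, ht, hdt⟩ := Nat.sInf_mem hne'
    exact ⟨t, ht, hdt, fun s hs => Nat.sInf_le ⟨s, hs, rfl⟩⟩
  obtain ⟨v, hv, hvmax⟩ := Finset.exists_max_image (E.sup id) f hne
  obtain ⟨tstar, hvchi, hdt, hmin⟩ := hfmem v hv
  obtain ⟨e, he_lam, hve⟩ := D.guard tstar v hvchi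
  refine ⟨e, D.lam_sub tstar he_lam, v, hve, ?_⟩
  intro g hg hvg u hug
  have husupp : u ∈ E.sup id := Finset.mem_sup.mpr ⟨g, hg, by simpa using hug⟩
  obtain ⟨tg, hsubg⟩ := D.edge_cover g hg
  obtain ⟨tu, huchi, hdtu, hminu⟩ := hfmem u husupp
  -- step 1 : tstar lies on the path from tg to the root
  have h1 : tstar ∈ (P tg).support := by
    refine hP.min_anc (D.conn v) hvchi ?_ tg (hsubg hvg)
    intro x hx
    have : f v ≤ (P x).length := hmin x hx
    omega
  -- step 3 : u belongs to the bag of tstar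
  have h3 : u ∈ D.chi tstar := by
    by_contra hnc
    obtain ⟨w, hwS⟩ := walk_in_set (D.conn u) (hsubg hug) huchi
    have h2 : tstar ∈ (w.append (P tu)).support :=
      hP.mem_of_walk _ h1
    rcases (SimpleGraph.Walk.mem_support_append_iff _ _).mp h2 with h | h
    · exact hnc (hwS _ h)
    · -- tstar on P tu with d tu ≤ d tstar forces tu = tstar
      have hle : (P tstar).length ≤ (P tu).length := hP.length_le h
      have hge : (P tu).length ≤ (P tstar).length := by
        have := hvmax u husupp
        omega
      have hsplit := hP.length_split h
      have h0 : ((P tu).takeUntil tstar h).length = 0 := by omega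
      have : tu = tstar := SimpleGraph.Walk.eq_of_length_eq_zero h0
      exact hnc (this ▸ huchi)
  obtain ⟨e', he'_lam, hue'⟩ := D.guard tstar u h3
  have hee : e' = e := Finset.card_le_one.mp (hw tstar) e' he'_lam e he_lam
  exact hee ▸ hue'

/-- Restriction of a width-1 GHD after removing the vertices of an edge `e`. -/
def GHD.restrict {E : Finset (Finset V)} (D : GHD V E) (e : Finset V) :
    GHD V (E.image (· \ e)) where
  T := D.T
  G := D.G
  isTree := D.isTree
  root := D.root
  lam := fun t => (D.lam t).image (· \ e)
  chi := fun t => D.chi t \ e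
  lam_sub := fun t => Finset.image_subset_image (D.lam_sub t)
  conn := by
    intro v
    by_cases hve : v ∈ e
    · intro a
      exact absurd a.2 (by simp [hve])
    · have hset : {t | v ∈ D.chi t \ e} = {t | v ∈ D.chi t} := by
        ext t; simp [Finset.mem_sdiff, hve]
      rw [hset]
      exact D.conn v
  edge_cover := by
    intro f hf
    obtain ⟨g, hg, rfl⟩ := Finset.mem_image.mp hf
    obtain ⟨t, ht⟩ := D.edge_cover g hg
    exact ⟨t, Finset.sdiff_subset_sdiff ht (le_refl _)⟩
  guard := by
    intro t v hv
    rw [Finset.mem_sdiff] at hv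
    obtain ⟨f, hf, hvf⟩ := D.guard t v hv.1
    exact ⟨f \ e, Finset.mem_image_of_mem _ hf, Finset.mem_sdiff.mpr ⟨hvf, hv.2⟩⟩

lemma restrict_sup (E : Finset (Finset V)) (e : Finset V) :
    (E.image (· \ e)).sup id = E.sup id \ e := by
  ext u
  simp only [Finset.mem_sup, Finset.mem_image, Finset.mem_sdiff, id]
  constructor
  · rintro ⟨_, ⟨g, hg, rfl⟩, hu⟩
    rw [Finset.mem_sdiff] at hu
    exact ⟨⟨g, hg, hu.1⟩, hu.2⟩
  · rintro ⟨⟨g, hg, hug⟩, hue⟩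
    exact ⟨g \ e, ⟨g, hg, rfl⟩, Finset.mem_sdiff.mpr ⟨hug, hue⟩⟩

lemma main_ind : ∀ (n : ℕ) (E : Finset (Finset V)) (D : GHD V E),
    (∀ t, (D.lam t).card ≤ 1) → (E.sup id).card ≤ n →
    ∃ (I : Finset V) (C : Finset (Finset V)), IsIndep E I ∧ I ⊆ E.sup id ∧ C ⊆ E ∧
      (∀ u ∈ E.sup id, ∃ c ∈ C, u ∈ c) ∧ C.card ≤ I.card := by
  intro n
  induction n with
  | zero =>
    intro E D _ hcard
    refine ⟨∅, ∅, ?_, ?_, ?_, ?_, ?_⟩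
    · intro _ _ u hu; exact absurd hu (by simp)
    · simp
    · simp
    · intro u hu
      rw [Nat.le_zero, Finset.card_eq_zero] at hcard
      rw [hcard] at hu
      exact absurd hu (by simp)
    · simp
  | succ n ih =>
    intro E D hw hcard
    by_cases hne : (E.sup id).Nonempty
    case neg =>
      rw [Finset.not_nonempty_iff_eq_empty] at hne
      refine ⟨∅, ∅, ?_, ?_, ?_, ?_, ?_⟩
      · intro _ _ u hu; exact absurd hu (by simp)
      · simp
      · simp
      · intro u hu; rw [hne] at hu; exact absurd hu (by simp)
      · simp
    obtain ⟨e, heE, v, hve, hpiv⟩ := exists_pivot E D hw hne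
    have hvsupp : v ∈ E.sup id := Finset.mem_sup.mpr ⟨e, heE, by simpa using hve⟩
    -- recurse on the restricted hypergraph
    have hsup' : (E.image (· \ e)).sup id = E.sup id \ e := restrict_sup E e
    have hcard' : ((E.image (· \ e)).sup id).card ≤ n := by
      rw [hsup']
      have hss : E.sup id \ e ⊂ E.sup id := by
        apply Finset.sdiff_ssubset ?_ ⟨v, hve⟩
        intro x hx
        exact Finset.mem_sup.mpr ⟨e, heE, by simpa using hx⟩
      have := Finset.card_lt_card hss
      omega
    obtain ⟨I', C', hI', hIsub', hCsub', hcov', hcc'⟩ :=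
      ih (E.image (· \ e)) (D.restrict e) (fun t => le_trans (Finset.card_image_le) (hw t)) hcard'
    have hvnot : v ∉ I' := by
      intro hvI
      have := hIsub' hvI
      rw [hsup', Finset.mem_sdiff] at this
      exact this.2 hve
    -- build the cover
    have hCE' : ∀ c ∈ C', ∃ g ∈ E, c ⊆ g := by
      intro c hc
      obtain ⟨g, hg, rfl⟩ := Finset.mem_image.mp (hCsub' hc)
      exact ⟨g, hg, Finset.sdiff_subset⟩
    set C : Finset (Finset V) :=
      insert e (C'.attach.image fun c => (hCE' c.1 c.2).choose) with hC_def
    refine ⟨insert v I', C, ?_, ?_, ?_, ?_, ?_⟩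
    · -- independence
      intro g hg x hx y hy hxg hyg
      rw [Finset.mem_insert] at hx hy
      have hmem : ∀ z ∈ I', z ∉ e := by
        intro z hz
        have := hIsub' hz
        rw [hsup', Finset.mem_sdiff] at this
        exact this.2
      rcases hx with rfl | hx <;> rcases hy with rfl | hy
      · rfl
      · exact absurd ((hpiv g hg hxg) hyg) (hmem y hy)
      · exact absurd ((hpiv g hg hyg) hxg) (hmem x hx)
      · refine hI' (g \ e) (Finset.mem_image_of_mem _ hg) x ?_ y ?_
          (Finset.mem_sdiff.mpr ⟨hxg, hmem x hx⟩) (Finset.mem_sdiff.mpr ⟨hyg, hmem y hy⟩)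
        · exact hx
        · exact hy
    · -- I ⊆ supp
      intro x hx
      rcases Finset.mem_insert.mp hx with rfl | hx
      · exact hvsupp
      · have := hIsub' hx
        rw [hsup'] at this
        exact (Finset.sdiff_subset) this
    · -- C ⊆ E
      intro c hc
      rcases Finset.mem_insert.mp hc with rfl | hc
      · exact heE
      · obtain ⟨x, _, rfl⟩ := Finset.mem_image.mp hc
        exact (hCE' x.1 x.2).choose_spec.1
    · -- cover
      intro u hu
      by_cases hue : u ∈ e
      · exact ⟨e, Finset.mem_insert_self _ _, hue⟩
      · have hu' : u ∈ (E.image (· \ e)).sup id := by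
          rw [hsup', Finset.mem_sdiff]; exact ⟨hu, hue⟩
        obtain ⟨c, hc, huc⟩ := hcov' u hu'
        refine ⟨(hCE' c hc).choose, ?_, (hCE' c hc).choose_spec.2 huc⟩
        rw [hC_def]
        exact Finset.mem_insert_of_mem
          (Finset.mem_image.mpr ⟨⟨c, hc⟩, Finset.mem_attach _ _, rfl⟩)
    · -- cardinality
      have h1 : C.card ≤ C'.card + 1 := by
        rw [hC_def]
        calc (insert e (C'.attach.image fun c => (hCE' c.1 c.2).choose)).card
            ≤ (C'.attach.image fun c => (hCE' c.1 c.2).choose).card + 1 :=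
              Finset.card_insert_le _ _
          _ ≤ C'.attach.card + 1 := by
              have := Finset.card_image_le
                (s := C'.attach) (f := fun c => (hCE' c.1 c.2).choose)
              omega
          _ = C'.card + 1 := by rw [Finset.card_attach]
      have h2 : (insert v I').card = I'.card + 1 := Finset.card_insert_of_notMem hvnot
      omega

end Hyper

/-- In an acyclic hypergraph (generalized hypertree width 1) without isolated
vertices, the maximum size of an independent set equals the minimum size of an
edge cover. -/
theorem acyclic_max_indep_eq_min_cover {V : Type} [Fintype V] [DecidableEq V]
    (E : Finset (Finset V))
    (hacyclic : ∃ D : GHD V E, ∀ t, (D.lam t).card ≤ 1)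
    (hnoiso : ∀ v : V, ∃ e ∈ E, v ∈ e) :
    sSup {n : ℕ | ∃ I : Finset V, IsIndep E I ∧ I.card = n} =
      sInf {n : ℕ | ∃ C : Finset (Finset V), IsEdgeCover E C ∧ C.card = n} := by
  classical
  obtain ⟨D, hw⟩ := hacyclic
  have hsupp : E.sup id = Finset.univ := by
    ext v
    simp only [Finset.mem_univ, iff_true]
    obtain ⟨e, he, hv⟩ := hnoiso v
    exact Finset.mem_sup.mpr ⟨e, he, by simpa using hv⟩
  obtain ⟨I, C, hI, hIsub, hCsub, hcov, hcc⟩ := main_ind (E.sup id).card E D hw le_rfl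
  have hCcover : IsEdgeCover E C :=
    ⟨hCsub, fun v => hcov v (by rw [hsupp]; exact Finset.mem_univ v)⟩
  have hIS : I.card ∈ {n : ℕ | ∃ I : Finset V, IsIndep E I ∧ I.card = n} := ⟨I, hI, rfl⟩
  have hCT : C.card ∈ {n : ℕ | ∃ C : Finset (Finset V), IsEdgeCover E C ∧ C.card = n} :=
    ⟨C, hCcover, rfl⟩
  have hbound : ∀ m ∈ {n : ℕ | ∃ I : Finset V, IsIndep E I ∧ I.card = n},
      ∀ k ∈ {n : ℕ | ∃ C : Finset (Finset V), IsEdgeCover E C ∧ C.card = n}, m ≤ k := by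
    rintro m ⟨I₀, hI₀, rfl⟩ k ⟨C₀, hC₀, rfl⟩
    have hfdef : ∀ u : V, ∃ c ∈ C₀, u ∈ c := fun u => hC₀.2 u
    refine Finset.card_le_card_of_injOn (fun u => (hfdef u).choose) ?_ ?_
    · intro u _
      exact (hfdef u).choose_spec.1
    · intro u₁ hu₁ u₂ hu₂ heq
      have h1 := (hfdef u₁).choose_spec
      have h2 := (hfdef u₂).choose_spec
      refine hI₀ (hfdef u₁).choose (hC₀.1 h1.1) u₁ hu₁ u₂ hu₂ h1.2 ?_
      have heq' : (hfdef u₁).choose = (hfdef u₂).choose := heq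
      rw [heq']; exact h2.2
  have hbdd : BddAbove {n : ℕ | ∃ I : Finset V, IsIndep E I ∧ I.card = n} :=
    ⟨C.card, fun m hm => hbound m hm _ hCT⟩
  refine le_antisymm ?_ ?_
  · refine le_csInf ⟨C.card, hCT⟩ ?_
    intro k hk
    exact csSup_le ⟨I.card, hIS⟩ (fun m hm => hbound m hm k hk)
  · exact le_trans (Nat.sInf_le hCT) (le_trans hcc (le_csSup hbdd hIS))
end

section
/- Let H be a hypergraph with a generalized hypertree decomposition of width k, let ℓ be the maximum size of an independent set of H, and let ℓ' be the maximum size of an independent set of H'=(V, {χ_t | t ∈ T}) (the hypergraph of blocks of the decomposition). Then ℓ/k ≤ ℓ' ≤ ℓ. -/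
open SimpleGraph

section TreeLemmas
variable {T : Type} [DecidableEq T] {G : SimpleGraph T}

lemma path_support_subset_walk (ha : G.IsAcyclic) {a b : T}
    {p : G.Walk a b} (hp : p.IsPath) (q : G.Walk a b) : p.support ⊆ q.support := by
  have h : (⟨p, hp⟩ : G.Path a b) = q.toPath := ha.path_unique _ _
  have hs : p.support = (q.toPath : G.Walk a b).support := by rw [← h]
  rw [hs]; exact q.support_toPath_subset

lemma tree_path_length (hc : G.Connected) (ha : G.IsAcyclic) {a b : T}
    {p : G.Walk a b} (hp : p.IsPath) : p.length = G.dist a b := by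
  obtain ⟨q, hq, hql⟩ := hc.exists_path_of_dist a b
  have h : (⟨p, hp⟩ : G.Path a b) = ⟨q, hq⟩ := ha.path_unique _ _
  have hpq : p = q := congrArg Subtype.val h
  rw [hpq, hql]

lemma exists_dist_on_path (hc : G.Connected) (ha : G.IsAcyclic) {r : T} :
    ∀ {a : T} (p : G.Walk a r), p.IsPath → ∀ m ≤ G.dist a r,
      ∃ x ∈ p.support, G.dist x r = m := by
  intro a p
  induction p with
  | nil =>
    intro _ m hm
    rw [SimpleGraph.dist_self, Nat.le_zero] at hm
    subst hm
    exact ⟨_, by simp, SimpleGraph.dist_self⟩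
  | @cons a b r h q ih =>
    intro hp m hm
    have hq : q.IsPath := hp.of_cons
    have hql : q.length = G.dist b r := tree_path_length hc ha hq
    have hpl : q.length + 1 = G.dist a r := by
      have h2 := tree_path_length hc ha hp
      simpa using h2
    by_cases hcase : m ≤ G.dist b r
    · obtain ⟨x, hx, hxd⟩ := ih hq m hcase
      exact ⟨x, by simp [hx], hxd⟩
    · exact ⟨a, by simp, by omega⟩

lemma top_of_path (hc : G.Connected) (ha : G.IsAcyclic) {t r : T}
    {p : G.Walk t r} (hp : p.IsPath) {y : T} (hy : y ∈ p.support)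
    (hd : G.dist t r ≤ G.dist y r) : y = t := by
  have h1 : G.dist y r ≤ (p.dropUntil y hy).length := SimpleGraph.dist_le _
  have h2 := congrArg Walk.length (p.take_spec hy)
  rw [Walk.length_append] at h2
  have h3 : p.length = G.dist t r := tree_path_length hc ha hp
  have h4 : (p.takeUntil y hy).length = 0 := by omega
  exact (Walk.eq_of_length_eq_zero h4).symm


section Decomp
variable {V : Type} [DecidableEq V] {E : Finset (Finset V)} (D : GHD V E)

/-- minimal depth of a bag containing `v`. -/
noncomputable def GHD.dv (v : V) : ℕ :=
  sInf {n | ∃ t, v ∈ D.chi t ∧ D.G.dist t D.root = n}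

open Classical in
/-- a bag of `v` of minimal depth. -/
noncomputable def GHD.top (v : V) : D.T :=
  if h : ∃ t, v ∈ D.chi t ∧ D.G.dist t D.root = D.dv v then h.choose else D.root

lemma GHD.dv_le {v : V} {s : D.T} (hv : v ∈ D.chi s) :
    D.dv v ≤ D.G.dist s D.root := Nat.sInf_le ⟨s, hv, rfl⟩

lemma GHD.top_spec {v : V} (hv : ∃ t, v ∈ D.chi t) :
    v ∈ D.chi (D.top v) ∧ D.G.dist (D.top v) D.root = D.dv v := by
  have hne : {n | ∃ t, v ∈ D.chi t ∧ D.G.dist t D.root = n}.Nonempty :=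
    ⟨_, hv.choose, hv.choose_spec, rfl⟩
  have h : ∃ t, v ∈ D.chi t ∧ D.G.dist t D.root = D.dv v := Nat.sInf_mem hne
  rw [GHD.top, dif_pos h]
  exact h.choose_spec

lemma GHD.subtree_walk {v : V} {a b : D.T} (hva : v ∈ D.chi a) (hvb : v ∈ D.chi b) :
    ∃ w : D.G.Walk a b, ∀ x ∈ w.support, v ∈ D.chi x := by
  obtain ⟨w0⟩ := D.conn v ⟨a, hva⟩ ⟨b, hvb⟩
  refine ⟨w0.map (SimpleGraph.Embedding.induce _).toHom, ?_⟩
  intro x hx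
  change x ∈ (w0.map (SimpleGraph.Embedding.induce {t | v ∈ D.chi t}).toHom).support at hx
  rw [SimpleGraph.Walk.support_map] at hx
  obtain ⟨⟨y, hy⟩, _, rfl⟩ := List.mem_map.mp hx
  exact hy

end Decomp

section Decomp2
variable {V : Type} [DecidableEq V] {E : Finset (Finset V)} (D : GHD V E)

lemma GHD.top_unique {v : V} {x y : D.T} (hx : v ∈ D.chi x) (hy : v ∈ D.chi y)
    (hdx : D.G.dist x D.root = D.dv v) (hdy : D.G.dist y D.root = D.dv v) : x = y := by
  haveI := Classical.decEq D.T
  have hc := D.isTree.isConnected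
  have ha := D.isTree.IsAcyclic
  by_contra hne
  have hd1 : 1 ≤ D.dv v := by
    by_contra h0
    have h0' : D.dv v = 0 := by omega
    have hxr : x = D.root := by
      rcases SimpleGraph.dist_eq_zero_iff_eq_or_not_reachable.mp (hdx.trans h0') with h | h
      · exact h
      · exact absurd (hc.preconnected x D.root) h
    have hyr : y = D.root := by
      rcases SimpleGraph.dist_eq_zero_iff_eq_or_not_reachable.mp (hdy.trans h0') with h | h
      · exact h
      · exact absurd (hc.preconnected y D.root) h
    exact hne (hxr.trans hyr.symm)
  obtain ⟨Px, hPx, hPxl⟩ := hc.exists_path_of_dist x D.root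
  obtain ⟨Py, hPy, hPyl⟩ := hc.exists_path_of_dist y D.root
  obtain ⟨W, hW⟩ := D.subtree_walk hx hy
  have hsub : Px.support ⊆ (W.append Py).support := path_support_subset_walk ha hPx _
  obtain ⟨z, hz, hzd⟩ := exists_dist_on_path hc ha Px hPx (D.dv v - 1) (by omega)
  have hzQ := hsub hz
  rw [SimpleGraph.Walk.mem_support_append_iff] at hzQ
  have hzPy : z ∈ Py.support := by
    rcases hzQ with h | h
    · have := D.dv_le (hW z h)
      omega
    · exact h
  obtain ⟨Pxy, hPxy, _⟩ := hc.exists_path_of_dist x y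
  have hsubW : Pxy.support ⊆ W.support := path_support_subset_walk ha hPxy W
  have hsubR : Pxy.support ⊆
      ((Px.takeUntil z hz).append ((Py.takeUntil z hzPy).reverse)).support :=
    path_support_subset_walk ha hPxy _
  have hmem : ∀ w ∈ Pxy.support, w = x ∨ w = y := by
    intro w hw
    have h1 := hsubR hw
    rw [SimpleGraph.Walk.mem_support_append_iff] at h1
    have hdw : D.dv v ≤ D.G.dist w D.root := D.dv_le (hW w (hsubW hw))
    rcases h1 with h1 | h1
    · exact Or.inl (top_of_path hc ha hPx (Px.support_takeUntil_subset hz h1) (by omega))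
    · rw [SimpleGraph.Walk.support_reverse, List.mem_reverse] at h1
      exact Or.inr (top_of_path hc ha hPy (Py.support_takeUntil_subset hzPy h1) (by omega))
  have hnodup : Pxy.support.Nodup := hPxy.support_nodup
  have hsupplen : Pxy.support.length = Pxy.length + 1 := SimpleGraph.Walk.length_support _
  have hlen1 : Pxy.length ≤ 1 := by
    have hsubF : Pxy.support.toFinset ⊆ ({x, y} : Finset D.T) := by
      intro w hw
      rcases hmem w (List.mem_toFinset.mp hw) with h | h <;> simp [h]
    have hcard := Finset.card_le_card hsubF
    rw [List.toFinset_card_of_nodup hnodup] at hcard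
    have : ({x, y} : Finset D.T).card ≤ 2 := Finset.card_insert_le _ _ |>.trans (by simp)
    omega
  have hlen0 : Pxy.length ≠ 0 := fun h => hne (SimpleGraph.Walk.eq_of_length_eq_zero h)
  have hadj : D.G.Adj x y := Pxy.adj_of_length_eq_one (by omega)
  have hxPy : x ∉ Py.support := fun hmemx => hne (top_of_path hc ha hPy hmemx (by omega))
  have hCpath : (SimpleGraph.Walk.cons hadj Py).IsPath := hPy.cons hxPy
  have hClen := tree_path_length hc ha hCpath
  rw [SimpleGraph.Walk.length_cons] at hClen
  omega

lemma GHD.top_mem_path {v : V} {s : D.T} (hv : v ∈ D.chi s)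
    {p : D.G.Walk s D.root} (hp : p.IsPath) : D.top v ∈ p.support := by
  haveI := Classical.decEq D.T
  have hc := D.isTree.isConnected
  have ha := D.isTree.IsAcyclic
  obtain ⟨htv, htd⟩ := D.top_spec ⟨s, hv⟩
  obtain ⟨z, hz, hzd⟩ := exists_dist_on_path hc ha p hp (D.dv v) (D.dv_le hv)
  obtain ⟨W, hW⟩ := D.subtree_walk hv htv
  obtain ⟨Pt, hPt, hPtl⟩ := hc.exists_path_of_dist (D.top v) D.root
  have hsub : p.support ⊆ (W.append Pt).support := path_support_subset_walk ha hp _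
  have hzQ := hsub hz
  rw [SimpleGraph.Walk.mem_support_append_iff] at hzQ
  rcases hzQ with h | h
  · have : z = D.top v := D.top_unique (hW z h) htv hzd htd
    rwa [← this]
  · have : z = D.top v := top_of_path hc ha hPt h (by omega)
    rwa [← this]

lemma GHD.chi_top {u v : V} {s : D.T} (hu : u ∈ D.chi s) (hv : v ∈ D.chi s)
    (hd : D.dv u ≤ D.dv v) : u ∈ D.chi (D.top v) := by
  haveI := Classical.decEq D.T
  have hc := D.isTree.isConnected
  have ha := D.isTree.IsAcyclic
  obtain ⟨P, hP, hPl⟩ := hc.exists_path_of_dist s D.root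
  have htv : D.top v ∈ P.support := D.top_mem_path hv hP
  have htu : D.top u ∈ P.support := D.top_mem_path hu hP
  obtain ⟨hut, hud⟩ := D.top_spec ⟨s, hu⟩
  obtain ⟨hvt, hvd⟩ := D.top_spec ⟨s, hv⟩
  rw [← P.take_spec htu, SimpleGraph.Walk.mem_support_append_iff] at htv
  rcases htv with h | h
  · obtain ⟨W, hW⟩ := D.subtree_walk hu hut
    have hsub : (P.takeUntil (D.top u) htu).support ⊆ W.support :=
      path_support_subset_walk ha (hP.takeUntil htu) W
    exact hW _ (hsub h)
  · have : D.top v = D.top u := top_of_path hc ha (hP.dropUntil htu) h (by omega)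
    rwa [this]

end Decomp2

section Decomp3
variable {V : Type} [DecidableEq V] {E : Finset (Finset V)} (D : GHD V E)

lemma GHD.bag_bound {I : Finset V} (hI : IsIndep E I) (t : D.T) :
    (I ∩ D.chi t).card ≤ (D.lam t).card := by
  classical
  set g : V → Finset V := fun w => if h : ∃ e ∈ D.lam t, w ∈ e then h.choose else ∅ with hg
  have hgspec : ∀ w ∈ I ∩ D.chi t, g w ∈ D.lam t ∧ w ∈ g w := by
    intro w hw'
    have h : ∃ e ∈ D.lam t, w ∈ e := D.guard t w (Finset.mem_inter.mp hw').2
    rw [hg]; simp only [dif_pos h]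
    exact h.choose_spec
  apply Finset.card_le_card_of_injOn g (fun a ha => (hgspec a ha).1)
  intro a ha b hb hab
  have ha' : a ∈ I ∩ D.chi t := by simpa using ha
  have hb' : b ∈ I ∩ D.chi t := by simpa using hb
  exact hI (g a) (D.lam_sub t (hgspec a ha').1) a (Finset.mem_inter.mp ha').1
    b (Finset.mem_inter.mp hb').1 (hgspec a ha').2 (hab ▸ (hgspec b hb').2)

lemma GHD.greedy {k : ℕ} (hk : 0 < k) (hw : ∀ t, (D.lam t).card ≤ k)
    {I : Finset V} (hI : IsIndep E I) :
    ∀ n (S : Finset V), S.card ≤ n → S ⊆ I →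
      ∃ J : Finset V, J ⊆ S ∧
        (∀ t, ∀ u ∈ J, ∀ v ∈ J, u ∈ D.chi t → v ∈ D.chi t → u = v) ∧
        S.card ≤ k * J.card := by
  intro n
  induction n with
  | zero =>
    intro S hS _
    exact ⟨∅, Finset.empty_subset _, by simp, by simpa using hS⟩
  | succ n ih =>
    intro S hS hSI
    classical
    by_cases hb : ∃ v ∈ S, ∃ t, v ∈ D.chi t
    · obtain ⟨v0, hv0S, hv0b⟩ := hb
      set Sb := S.filter (fun v => ∃ t, v ∈ D.chi t) with hSb
      have hSbne : Sb.Nonempty := ⟨v0, Finset.mem_filter.mpr ⟨hv0S, hv0b⟩⟩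
      obtain ⟨v, hvSb, hvmax⟩ := Sb.exists_max_image D.dv hSbne
      obtain ⟨hvS, hvb⟩ := Finset.mem_filter.mp hvSb
      obtain ⟨hvt, -⟩ := D.top_spec hvb
      set t0 := D.top v with ht0
      set S' := S \ D.chi t0 with hS'
      have hvnotS' : v ∉ S' := by simp [hS', hvt]
      have hS'sub : S' ⊆ S := Finset.sdiff_subset
      have hcard' : S'.card ≤ n := by
        have h1 : S'.card < S.card :=
          Finset.card_lt_card ⟨hS'sub, fun hsub => (hvnotS' (hsub hvS)).elim⟩
        omega
      obtain ⟨J', hJ'S', hJ'ind, hJ'card⟩ := ih S' hcard' (hS'sub.trans hSI)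
      have key : ∀ t, ∀ u' ∈ J', u' ∈ D.chi t → v ∈ D.chi t → False := by
        intro t u' hu' hu't hvt'
        have hu'S : u' ∈ S := hS'sub (hJ'S' hu')
        have hu'b : u' ∈ Sb := Finset.mem_filter.mpr ⟨hu'S, ⟨t, hu't⟩⟩
        have hd : D.dv u' ≤ D.dv v := hvmax u' hu'b
        have : u' ∈ D.chi t0 := D.chi_top hu't hvt' hd
        exact (Finset.mem_sdiff.mp (hJ'S' hu')).2 this
      refine ⟨insert v J', ?_, ?_, ?_⟩
      · intro u hu
        rcases Finset.mem_insert.mp hu with rfl | hu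
        · exact hvS
        · exact hS'sub (hJ'S' hu)
      · intro t u hu w hw hut hwt
        rcases Finset.mem_insert.mp hu with hu1 | hu1
        · rcases Finset.mem_insert.mp hw with hw1 | hw1
          · rw [hu1, hw1]
          · exact (key t w hw1 hwt (hu1 ▸ hut)).elim
        · rcases Finset.mem_insert.mp hw with hw1 | hw1
          · exact (key t u hu1 hut (hw1 ▸ hwt)).elim
          · exact hJ'ind t u hu1 w hw1 hut hwt
      · have hvJ' : v ∉ J' := fun h => hvnotS' (hJ'S' h)
        rw [Finset.card_insert_of_notMem hvJ', Nat.mul_add, Nat.mul_one]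
        have hsplit : S'.card + (S ∩ D.chi t0).card = S.card := by
          rw [hS']; exact Finset.card_sdiff_add_card_inter S _
        have hbag : (S ∩ D.chi t0).card ≤ k := by
          have h1 : (S ∩ D.chi t0) ⊆ (I ∩ D.chi t0) :=
            Finset.inter_subset_inter hSI (Finset.Subset.refl _)
          exact (Finset.card_le_card h1).trans ((D.bag_bound hI t0).trans (hw t0))
        omega
    · push_neg at hb
      refine ⟨S, Finset.Subset.refl _, ?_, Nat.le_mul_of_pos_left _ hk⟩
      intro t u hu w hw hut _
      exact (hb u hu t hut).elim

end Decomp3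

/-- Let H have a generalized hypertree decomposition of width k, let ℓ be the
maximum size of an independent set of H and ℓ' the maximum size of an independent
set of the hypergraph of blocks. Then ℓ / k ≤ ℓ' ≤ ℓ. -/
theorem blocks_indep_approx {V : Type} [DecidableEq V]
    (E : Finset (Finset V)) (k : ℕ) (D : GHD V E)
    (hw : ∀ t, (D.lam t).card ≤ k)
    (I I' : Finset V)
    (hI : IsIndep E I)
    (hImax : ∀ J : Finset V, IsIndep E J → J.card ≤ I.card)
    (hI' : ∀ t, ∀ u ∈ I', ∀ v ∈ I', u ∈ D.chi t → v ∈ D.chi t → u = v)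
    (hI'max : ∀ J : Finset V,
      (∀ t, ∀ u ∈ J, ∀ v ∈ J, u ∈ D.chi t → v ∈ D.chi t → u = v) →
      J.card ≤ I'.card) :
    (I.card : ℝ) / k ≤ I'.card ∧ I'.card ≤ I.card := by
  classical
  have h2 : I'.card ≤ I.card := by
    apply hImax
    intro e he u hu w hw' hue hwe
    obtain ⟨t, ht⟩ := D.edge_cover e he
    exact hI' t u hu w hw' (ht hue) (ht hwe)
  refine ⟨?_, h2⟩
  rcases Nat.eq_zero_or_pos k with rfl | hk
  · rw [Nat.cast_zero, div_zero]
    positivity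
  · obtain ⟨J, hJI, hJind, hJcard⟩ :=
      D.greedy hk hw hI I.card I (le_refl _) (Finset.Subset.refl _)
    have hJ' : J.card ≤ I'.card := hI'max J hJind
    have hfin : I.card ≤ k * I'.card := hJcard.trans (Nat.mul_le_mul_left k hJ')
    rw [div_le_iff₀ (by exact_mod_cast hk)]
    calc (I.card : ℝ) ≤ ((k * I'.card : ℕ) : ℝ) := by exact_mod_cast hfin
      _ = I'.card * k := by push_cast; ring
end TreeLemmas
end

section
/- Let G=(V,E) be a simple loopless graph and k a positive integer. Define the hypergraph H with vertex set V×{1,…,k} and edges: V_i = V×{i} for each i ∈ [k]; H_v = {v}×[k] for each v ∈ V; and for all i,j ∈ [k] the pairs {(u,i),(v,j)} for each edge uv ∈ E. Then G has an independent set of size k if and only if H has an independent set of size k. -/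
def Hedges {V : Type} (G : SimpleGraph V) (k : ℕ) : Set (Set (V × Fin k)) :=
  {s | (∃ i : Fin k, s = {p : V × Fin k | p.2 = i}) ∨
       (∃ v : V, s = {p : V × Fin k | p.1 = v}) ∨
       (∃ u v : V, ∃ i j : Fin k, G.Adj u v ∧ s = ({(u, i), (v, j)} : Set (V × Fin k)))}

/-- G has an independent set of size k iff the hypergraph H constructed from G
and k has an independent set of size k. -/
theorem clique_reduction_indep_iff {V : Type} [DecidableEq V]
    (G : SimpleGraph V) (k : ℕ) (hk : 0 < k) :
    (∃ I : Finset V, I.card = k ∧ ∀ u ∈ I, ∀ v ∈ I, ¬ G.Adj u v) ↔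
    (∃ J : Finset (V × Fin k), J.card = k ∧
      ∀ e ∈ Hedges G k, ∀ p ∈ J, ∀ q ∈ J, p ∈ e → q ∈ e → p = q) := by
  constructor
  · rintro ⟨I, hI, hind⟩
    have e := I.equivFinOfCardEq hI
    have hinj : Function.Injective (fun v : {x // x ∈ I} => (v.1, e v)) := by
      intro a b hab
      exact Subtype.ext (congrArg Prod.fst hab)
    refine ⟨I.attach.image (fun v => (v.1, e v)), ?_, ?_⟩
    · rw [Finset.card_image_of_injective _ hinj, Finset.card_attach, hI]
    · intro s hs p hp q hq hpe hqe
      simp only [Finset.mem_image, Finset.mem_attach, true_and] at hp hq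
      obtain ⟨a, rfl⟩ := hp
      obtain ⟨b, rfl⟩ := hq
      rcases hs with ⟨i, rfl⟩ | ⟨v, rfl⟩ | ⟨u, v, i, j, hadj, rfl⟩
      · simp only [Set.mem_setOf_eq] at hpe hqe
        have : a = b := e.injective (hpe.trans hqe.symm)
        rw [this]
      · simp only [Set.mem_setOf_eq] at hpe hqe
        have : a = b := Subtype.ext (hpe.trans hqe.symm)
        rw [this]
      · rcases hpe with h1 | h1 <;> rcases hqe with h2 | h2
        · exact h1.trans h2.symm
        · exfalso
          exact hind a.1 a.2 b.1 b.2 (by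
            have ha : (a : V) = u := congrArg Prod.fst h1
            have hb : (b : V) = v := congrArg Prod.fst h2
            rw [ha, hb]; exact hadj)
        · exfalso
          exact hind a.1 a.2 b.1 b.2 (by
            have ha : (a : V) = v := congrArg Prod.fst h1
            have hb : (b : V) = u := congrArg Prod.fst h2
            rw [ha, hb]; exact hadj.symm)
        · exact h1.trans h2.symm
  · rintro ⟨J, hJ, h⟩
    have hfst : Set.InjOn Prod.fst (J : Set (V × Fin k)) := by
      intro p hp q hq hpq
      exact h {r | r.1 = p.1} (Or.inr (Or.inl ⟨p.1, rfl⟩)) p hp q hq rfl hpq.symm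
    refine ⟨J.image Prod.fst, ?_, ?_⟩
    · rw [Finset.card_image_of_injOn hfst, hJ]
    · intro u hu v hv hadj
      simp only [Finset.mem_image] at hu hv
      obtain ⟨p, hp, hpu⟩ := hu
      obtain ⟨q, hq, hqv⟩ := hv
      have hpq : p = q := by
        refine h ({(u, p.2), (v, q.2)} : Set (V × Fin k))
          (Or.inr (Or.inr ⟨u, v, p.2, q.2, hadj, rfl⟩)) p hp q hq ?_ ?_
        · left; exact Prod.ext hpu rfl
        · right; exact Prod.ext hqv rfl
      have : u = v := by rw [← hpu, ← hqv, hpq]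
      exact G.irrefl (this ▸ hadj)
end

section
/- Let (T,(λ_t),(χ_t)) be a hingetree decomposition of a hypergraph H, let t_j be a node of T, and let I ⊆ V_{t_j} (the union of all blocks in the subtree rooted at t_j) be an independent set of the hypergraph H_{t_j} whose edges are all edges appearing in guards within that subtree. Then I is an independent set of H_t, where t is the parent of t_j and H_t is defined analogously for the subtree rooted at t. -/
structure Hinge (V : Type) [DecidableEq V] (E : Finset (Finset V)) extends GHD V E where
  inter : ∀ t₁ t₂, t₁ ≠ t₂ →
    ∃ e₁ ∈ lam t₁, ∃ e₂ ∈ lam t₂, chi t₁ ∩ chi t₂ ⊆ e₁ ∩ e₂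
  guard_eq : ∀ t, ∀ v : V, v ∈ chi t ↔ ∃ e ∈ lam t, v ∈ e
  edge_in_guard : ∀ e ∈ E, ∃ t, e ∈ lam t

def Hinge.Et {V : Type} [DecidableEq V] {E : Finset (Finset V)}
    (D : Hinge V E) (t : D.T) : Set (Finset V) :=
  {e | ∃ s, D.toGHD.Desc t s ∧ e ∈ D.lam s}

lemma chi_connect {V : Type} [DecidableEq V] {E : Finset (Finset V)}
    (D : Hinge V E) (tj s s' : D.T) (u : V)
    (hs' : D.toGHD.Desc tj s') (hs : ¬ D.toGHD.Desc tj s)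
    (hu' : u ∈ D.chi s') (hu : u ∈ D.chi s) : u ∈ D.chi tj := by
  obtain ⟨r⟩ := D.conn u ⟨s', hu'⟩ ⟨s, hu⟩
  -- map walk in induced graph to G
  let f : (D.G.induce {t | u ∈ D.chi t}) →g D.G := ⟨Subtype.val, fun h => h⟩
  obtain ⟨q, hq⟩ := not_forall.mp hs
  have hroot : tj ∈ ((r.map f).append q).support := hs' _
  have htj : tj ∈ (r.map f).support := by
    rcases (SimpleGraph.Walk.mem_support_append_iff _ _).mp hroot with h | h
    · exact h
    · exact absurd h hq
  rw [SimpleGraph.Walk.support_map] at htj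
  obtain ⟨x, hx, hxeq⟩ := List.mem_map.mp htj
  have h2 : u ∈ D.chi (f x) := x.2
  rwa [hxeq] at h2

/-- In a hingetree decomposition, an independent set of the hypergraph H_{t_j}
of the subtree rooted at a node t_j, contained in the vertices V_{t_j} of that
subtree, is also an independent set of the hypergraph H_t of the subtree rooted
at the parent t of t_j. -/
theorem hinge_subtree_indep_lift {V : Type} [DecidableEq V]
    (E : Finset (Finset V)) (D : Hinge V E) (t tj : D.T)
    (hadj : D.G.Adj t tj) (hparent : D.toGHD.Desc t tj)
    (I : Set V) (hIsub : I ⊆ D.toGHD.Vt tj)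
    (hI : ∀ e ∈ D.Et tj, ∀ u ∈ I, ∀ v ∈ I, u ∈ e → v ∈ e → u = v) :
    ∀ e ∈ D.Et t, ∀ u ∈ I, ∀ v ∈ I, u ∈ e → v ∈ e → u = v := by
  intro e he u hu v hv hue hve
  obtain ⟨s, hts, hes⟩ := he
  by_cases hdesc : D.toGHD.Desc tj s
  · exact hI e ⟨s, hdesc, hes⟩ u hu v hv hue hve
  · have hstj : s ≠ tj := by rintro rfl; exact hdesc (fun p => p.start_mem_support)
    obtain ⟨e₁, he₁, e₂, he₂, hsub⟩ := D.inter s tj hstj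
    have hdtj : D.toGHD.Desc tj tj := fun p => p.start_mem_support
    -- u, v ∈ chi s
    have hus : u ∈ D.chi s := (D.guard_eq s u).mpr ⟨e, hes, hue⟩
    have hvs : v ∈ D.chi s := (D.guard_eq s v).mpr ⟨e, hes, hve⟩
    obtain ⟨su, hsu, husu⟩ := hIsub hu
    obtain ⟨sv, hsv, hvsv⟩ := hIsub hv
    have hutj : u ∈ D.chi tj := chi_connect D tj s su u hsu hdesc husu hus
    have hvtj : v ∈ D.chi tj := chi_connect D tj s sv v hsv hdesc hvsv hvs
    have hue₂ : u ∈ e₂ := (Finset.mem_inter.mp (hsub (Finset.mem_inter.mpr ⟨hus, hutj⟩))).2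
    have hve₂ : v ∈ e₂ := (Finset.mem_inter.mp (hsub (Finset.mem_inter.mpr ⟨hvs, hvtj⟩))).2
    exact hI e₂ ⟨tj, hdtj, he₂⟩ u hu v hv hue₂ hve₂
end
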